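/- Let Y ∈ St(n,k) have Y_{ii}=1, other entries 0, and let Ξ ∈ ℝ^{n×k} be rectangular-diagonal with diagonal entries λ₁,…,λ_k. Define II_Y(A,B) = −½ Y(AᵀB + BᵀA). For the basis vectors 𝒜_{ij} = (E_{ij} − E_{ji})/√2 (1 ≤ i < j ≤ k) and E_{ij} (k < i ≤ n, 1 ≤ j ≤ k) of T_Y St(n,k), one has ⟨II_Y(𝒜_{ij}, 𝒜_{ij}), Ξ⟩ = −½(λ_i + λ_j) and ⟨II_Y(E_{ij}, E_{ij}), Ξ⟩ = −λ_j, while ⟨II_Y(A,B), Ξ⟩ = 0 for any two distinct basis vectors A ≠ B. -/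

import Mathlib

open Matrix

/-- Index type for the tangent basis at `Y`: pairs `i < j ≤ k` (the `𝔰𝔬(k)` part)
and pairs `(i,j)` with `k ≤ i < n` (the Grassmannian part). -/
def tangentIndex (n k : ℕ) :=
  ({p : Fin k × Fin k // p.1 < p.2}) ⊕ ({q : Fin n × Fin k // k ≤ (q.1 : ℕ)})

/-- The tangent basis at `Y`: `𝒜_{ij} = (E_{ij} − E_{ji})/√2` and the `E_{ij}`. -/
noncomputable def tangentBasis {n k : ℕ} (hk : k ≤ n) :
    tangentIndex n k → Matrix (Fin n) (Fin k) ℝ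
  | Sum.inl p => (Real.sqrt 2)⁻¹ •
      (Matrix.single (Fin.castLE hk p.1.1) p.1.2 (1 : ℝ) -
        Matrix.single (Fin.castLE hk p.1.2) p.1.1 (1 : ℝ))
  | Sum.inr q => Matrix.single q.1.1 q.1.2 (1 : ℝ)

/-- The point `Y ∈ St(n,k)`. -/
def stiefelY (n k : ℕ) : Matrix (Fin n) (Fin k) ℝ :=
  Matrix.of fun i j => if (i : ℕ) = (j : ℕ) then 1 else 0

lemma stiefel_key {n k : ℕ} (hk : k ≤ n) (l : Fin k → ℝ) (A B : Matrix (Fin n) (Fin k) ℝ) :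
    Matrix.trace ((-(1/2:ℝ) • (stiefelY n k * (Aᵀ * B + Bᵀ * A)))ᵀ *
      Matrix.of fun (i : Fin n) (j : Fin k) => if (i : ℕ) = (j : ℕ) then l j else 0)
    = -∑ j : Fin k, (∑ i : Fin n, A i j * B i j) * l j := by
  rw [Matrix.trace]
  simp only [Matrix.diag_apply, Matrix.mul_apply, Matrix.transpose_apply,
    Matrix.smul_apply, Matrix.of_apply, smul_eq_mul, Matrix.add_apply, stiefelY]
  rw [← Finset.sum_neg_distrib]
  refine Finset.sum_congr rfl fun j _ => ?_
  rw [Finset.sum_eq_single (Fin.castLE hk j)]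
  · rw [Finset.sum_eq_single (j : Fin k)]
    · simp only [Fin.coe_castLE, if_pos rfl, if_true, one_mul]
      rw [show ∑ x : Fin n, B x j * A x j = ∑ x : Fin n, A x j * B x j from
        Finset.sum_congr rfl fun x _ => mul_comm _ _]
      ring
    · intro m _ hm
      simp [Fin.val_eq_val, hm, Ne.symm hm]
    · simp
  · intro i _ hi
    have : (i : ℕ) ≠ (j : ℕ) := by
      intro h; apply hi; exact Fin.ext (by simpa using h)
    simp [this]
  · simp

lemma stiefel_offdiag_pt {n k : ℕ} (hk : k ≤ n) (a b : tangentIndex n k) (hab : a ≠ b)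
    (i : Fin n) (j : Fin k) : tangentBasis hk a i j * tangentBasis hk b i j = 0 := by
  cases a with
  | inl p =>
    cases b with
    | inl p' =>
      have hpp' : ¬((p.1.1 : ℕ) = (p'.1.1 : ℕ) ∧ (p.1.2 : ℕ) = (p'.1.2 : ℕ)) := by
        rintro ⟨h1, h2⟩
        exact hab (congrArg Sum.inl (Subtype.ext (Prod.ext (Fin.ext h1) (Fin.ext h2))))
      have hp : (p.1.1 : ℕ) < (p.1.2 : ℕ) := p.2
      have hp' : (p'.1.1 : ℕ) < (p'.1.2 : ℕ) := p'.2
      simp only [tangentBasis, Matrix.smul_apply, Matrix.sub_apply, Matrix.single,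
        Matrix.of_apply, smul_eq_mul]
      split_ifs <;> try ring
      all_goals exfalso
      all_goals (simp only [Fin.ext_iff, Fin.coe_castLE, Prod.mk.injEq, not_and] at *; omega)
    | inr q =>
      have hq : k ≤ (q.1.1 : ℕ) := q.2
      have h1 : (p.1.1 : ℕ) < k := p.1.1.isLt
      have h2 : (p.1.2 : ℕ) < k := p.1.2.isLt
      simp only [tangentBasis, Matrix.smul_apply, Matrix.sub_apply, Matrix.single,
        Matrix.of_apply, smul_eq_mul]
      split_ifs <;> try ring
      all_goals exfalso
      all_goals (simp only [Fin.ext_iff, Fin.coe_castLE] at *; omega)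
  | inr q =>
    cases b with
    | inl p =>
      have hq : k ≤ (q.1.1 : ℕ) := q.2
      have h1 : (p.1.1 : ℕ) < k := p.1.1.isLt
      have h2 : (p.1.2 : ℕ) < k := p.1.2.isLt
      simp only [tangentBasis, Matrix.smul_apply, Matrix.sub_apply, Matrix.single,
        Matrix.of_apply, smul_eq_mul]
      split_ifs <;> try ring
      all_goals exfalso
      all_goals (simp only [Fin.ext_iff, Fin.coe_castLE] at *; omega)
    | inr q' =>
      have hqq' : ¬((q.1.1 : ℕ) = (q'.1.1 : ℕ) ∧ (q.1.2 : ℕ) = (q'.1.2 : ℕ)) := by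
        rintro ⟨h1, h2⟩
        exact hab (congrArg Sum.inr (Subtype.ext (Prod.ext (Fin.ext h1) (Fin.ext h2))))
      simp only [tangentBasis, Matrix.single, Matrix.of_apply]
      split_ifs <;> try ring
      all_goals exfalso
      all_goals (simp only [Fin.ext_iff, not_and] at *; omega)

/-- The second fundamental form at `Y` paired with a rectangular-diagonal `Ξ` is diagonal
in the standard tangent basis, with the stated diagonal values. -/
theorem stiefel_II_eigenvalues (n k : ℕ) (hk : k ≤ n) (l : Fin k → ℝ) :
    (∀ p : {p : Fin k × Fin k // p.1 < p.2},
      Matrix.trace ((-(1 / 2 : ℝ) • (stiefelY n k *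
          ((tangentBasis hk (Sum.inl p))ᵀ * tangentBasis hk (Sum.inl p) +
            (tangentBasis hk (Sum.inl p))ᵀ * tangentBasis hk (Sum.inl p))))ᵀ *
        Matrix.of fun (i : Fin n) (j : Fin k) => if (i : ℕ) = (j : ℕ) then l j else 0) =
        -(1 / 2) * (l p.1.1 + l p.1.2)) ∧
    (∀ q : {q : Fin n × Fin k // k ≤ (q.1 : ℕ)},
      Matrix.trace ((-(1 / 2 : ℝ) • (stiefelY n k *
          ((tangentBasis hk (Sum.inr q))ᵀ * tangentBasis hk (Sum.inr q) +
            (tangentBasis hk (Sum.inr q))ᵀ * tangentBasis hk (Sum.inr q))))ᵀ *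
        Matrix.of fun (i : Fin n) (j : Fin k) => if (i : ℕ) = (j : ℕ) then l j else 0) =
        -(l q.1.2)) ∧
    (∀ a b : tangentIndex n k, a ≠ b →
      Matrix.trace ((-(1 / 2 : ℝ) • (stiefelY n k *
          ((tangentBasis hk a)ᵀ * tangentBasis hk b +
            (tangentBasis hk b)ᵀ * tangentBasis hk a)))ᵀ *
        Matrix.of fun (i : Fin n) (j : Fin k) => if (i : ℕ) = (j : ℕ) then l j else 0) = 0) := by
  refine ⟨fun p => ?_, fun q => ?_, fun a b hab => ?_⟩
  · rw [stiefel_key hk l (tangentBasis hk (Sum.inl p)) (tangentBasis hk (Sum.inl p))]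
    have hne : p.1.1 ≠ p.1.2 := p.2.ne
    have h2 : ((Real.sqrt 2)⁻¹ : ℝ) * (Real.sqrt 2)⁻¹ = 1/2 := by
      rw [← mul_inv, Real.mul_self_sqrt (by norm_num)]; norm_num
    have hc : Fin.castLE hk p.1.1 ≠ Fin.castLE hk p.1.2 := by
      simp [Fin.castLE_inj, hne]
    simp only [tangentBasis, Matrix.smul_apply, Matrix.sub_apply, Matrix.single,
      Matrix.of_apply, smul_eq_mul, ite_and, mul_ite, ite_mul, mul_zero, zero_mul, mul_one,
      Finset.sum_ite_eq, Finset.mem_univ, if_true]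
    simp only [mul_sub, sub_mul, ite_mul, mul_ite, mul_zero, zero_mul, mul_one,
      Finset.sum_sub_distrib, Finset.sum_ite_eq, Finset.mem_univ, if_true,
      hc, hc.symm, if_neg, Finset.sum_ite_of_false, Finset.sum_const_zero, if_false]
    rw [h2]; ring
  · rw [stiefel_key hk l (tangentBasis hk (Sum.inr q)) (tangentBasis hk (Sum.inr q))]
    simp only [tangentBasis, Matrix.single, Matrix.of_apply, ite_and, mul_ite, ite_mul,
      mul_zero, zero_mul, mul_one, Finset.sum_ite_eq, Finset.mem_univ, if_true]
    rw [one_mul]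
  · rw [stiefel_key hk l (tangentBasis hk a) (tangentBasis hk b)]
    rw [Finset.sum_eq_zero fun j _ => by
      rw [Finset.sum_eq_zero fun i _ => stiefel_offdiag_pt hk a b hab i j, zero_mul]]
    exact neg_zero
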